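/- Let (U,θ) be a perfect cocycle on H with stationary point Y, let S̃(ω) be a family of subsets of H, and suppose: (1) for all ω in a θ-invariant sure event and x ∈ S̃(ω), |U(t,x,ω) − Y(θ(t,ω))| ≤ β^{ε'}(ω) e^{(λ+ε')t} for all t ≥ 0 with λ + ε' < 0; (2) S̃(θ(t,ω)) contains all points z with |U(n,z,θ(t,ω)) − Y(θ(n+t,ω))| ≤ β₁(θ(t,ω)) e^{(λ+ε₁)n} for all integers n ≥ 0 and |z − Y(θ(t,ω))| ≤ ρ₁(θ(t,ω)); (3) the radii satisfy ρ₁(θ(t,ω)) ≥ ρ₁(ω)e^{(λ+ε₁)t} and β₁(θ(t,ω)) ≥ β₁(ω)e^{(λ+ε₁)t} with 0 < ε' < ε₁. Then there exists τ₁(ω) ≥ 0 such that U(t,·,ω)(S̃(ω)) ⊆ S̃(θ(t,ω)) for all t ≥ τ₁(ω). -/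

import Mathlib

open MeasureTheory

/-- Asymptotic invariance of the local stable manifolds: under
the exponential estimates (1)-(3) there is a random time `τ₁(ω) ≥ 0` such that
`U(t,·,ω)(S̃(ω)) ⊆ S̃(θ(t,ω))` for all `t ≥ τ₁(ω)`. -/
theorem stable_manifold_asymptotic_invariance
    {Ω : Type*} [MeasurableSpace Ω] (P : Measure Ω) [IsProbabilityMeasure P]
    {H : Type*} [NormedAddCommGroup H] [InnerProductSpace ℝ H]
    (θ : ℝ → Ω → Ω) (U : ℝ → H → Ω → H) (Y : Ω → H) (S : Ω → Set H)
    (E : Set Ω) (hE : P E = 1) (hEinv : ∀ t : ℝ, θ t '' E = E)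
    (lam ε' ε₁ : ℝ) (hneg : lam + ε' < 0) (hε' : 0 < ε') (hεε : ε' < ε₁)
    (β' β₁ ρ₁ : Ω → ℝ)
    (hβ' : ∀ ω, β' ω ∈ Set.Ioo (0:ℝ) 1) (hβ₁ : ∀ ω, β₁ ω ∈ Set.Ioo (0:ℝ) 1)
    (hρ₁ : ∀ ω, ρ₁ ω ∈ Set.Ioo (0:ℝ) 1)
    (hθgroup : ∀ t₁ t₂ : ℝ, ∀ ω, θ (t₁ + t₂) ω = θ t₂ (θ t₁ ω))
    (hθzero : ∀ ω, θ 0 ω = ω)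
    (hUcocycle : ∀ t₁ t₂ : ℝ, 0 ≤ t₁ → 0 ≤ t₂ → ∀ x ω,
      U (t₁ + t₂) x ω = U t₂ (U t₁ x ω) (θ t₁ ω))
    (hY : ∀ t : ℝ, 0 ≤ t → ∀ ω, U t (Y ω) ω = Y (θ t ω))
    (h1 : ∀ ω ∈ E, ∀ x ∈ S ω, ∀ t : ℝ, 0 ≤ t →
      ‖U t x ω - Y (θ t ω)‖ ≤ β' ω * Real.exp ((lam + ε') * t))
    (h2 : ∀ ω ∈ E, ∀ t : ℝ, 0 ≤ t → ∀ z : H,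
      (∀ n : ℕ, ‖U n z (θ t ω) - Y (θ ((n : ℝ) + t) ω)‖
        ≤ β₁ (θ t ω) * Real.exp ((lam + ε₁) * n)) →
      ‖z - Y (θ t ω)‖ ≤ ρ₁ (θ t ω) → z ∈ S (θ t ω))
    (h3 : ∀ ω ∈ E, ∀ t : ℝ, 0 ≤ t →
      ρ₁ ω * Real.exp ((lam + ε₁) * t) ≤ ρ₁ (θ t ω) ∧
      β₁ ω * Real.exp ((lam + ε₁) * t) ≤ β₁ (θ t ω)) :
    ∀ ω ∈ E, ∃ τ : ℝ, 0 ≤ τ ∧ ∀ t : ℝ, τ ≤ t → ∀ x ∈ S ω,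
      U t x ω ∈ S (θ t ω) := by
  intro ω hω
  set c := ε₁ - ε' with hc
  have hcpos : 0 < c := by simp only [hc]; linarith
  obtain ⟨hβ'0, _⟩ := hβ' ω
  obtain ⟨hβ₁0, _⟩ := hβ₁ ω
  obtain ⟨hρ₁0, _⟩ := hρ₁ ω
  set m := min (β₁ ω) (ρ₁ ω) with hm
  have hm0 : 0 < m := lt_min hβ₁0 hρ₁0
  refine ⟨max 0 (Real.log (β' ω / m) / c), le_max_left _ _, ?_⟩
  intro t ht x hx
  have ht0 : 0 ≤ t := le_trans (le_max_left _ _) ht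
  have hkey : β' ω ≤ m * Real.exp (c * t) := by
    have hlog : Real.log (β' ω / m) ≤ c * t := by
      have h' : Real.log (β' ω / m) / c ≤ t := le_trans (le_max_right 0 _) ht
      calc Real.log (β' ω / m) = (Real.log (β' ω / m) / c) * c := by
            field_simp
        _ ≤ t * c := mul_le_mul_of_nonneg_right h' hcpos.le
        _ = c * t := mul_comm _ _
    have hh := Real.exp_le_exp.mpr hlog
    rwa [Real.exp_log (div_pos hβ'0 hm0), div_le_iff₀ hm0, mul_comm] at hh
  have hβkey : β' ω ≤ β₁ ω * Real.exp (c * t) :=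
    hkey.trans (mul_le_mul_of_nonneg_right (min_le_left _ _) (Real.exp_pos _).le)
  have hρkey : β' ω ≤ ρ₁ ω * Real.exp (c * t) :=
    hkey.trans (mul_le_mul_of_nonneg_right (min_le_right _ _) (Real.exp_pos _).le)
  have hfac : β' ω * Real.exp ((lam + ε') * t) ≤ β₁ ω * Real.exp ((lam + ε₁) * t) := by
    have : β₁ ω * Real.exp ((lam + ε₁) * t)
        = (β₁ ω * Real.exp (c * t)) * Real.exp ((lam + ε') * t) := by
      rw [mul_assoc, ← Real.exp_add, hc]; ring_nf
    rw [this]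
    exact mul_le_mul_of_nonneg_right hβkey (Real.exp_pos _).le
  have hfacρ : β' ω * Real.exp ((lam + ε') * t) ≤ ρ₁ ω * Real.exp ((lam + ε₁) * t) := by
    have : ρ₁ ω * Real.exp ((lam + ε₁) * t)
        = (ρ₁ ω * Real.exp (c * t)) * Real.exp ((lam + ε') * t) := by
      rw [mul_assoc, ← Real.exp_add, hc]; ring_nf
    rw [this]
    exact mul_le_mul_of_nonneg_right hρkey (Real.exp_pos _).le
  apply h2 ω hω t ht0
  · intro n
    have hn : (0:ℝ) ≤ (n : ℝ) := Nat.cast_nonneg n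
    have hco := hUcocycle t (n : ℝ) ht0 hn x ω
    rw [← hco, show ((n : ℝ) + t) = t + (n : ℝ) from add_comm _ _]
    have hest := h1 ω hω x hx (t + (n : ℝ)) (by linarith)
    refine hest.trans ?_
    have h3' := (h3 ω hω t ht0).2
    calc β' ω * Real.exp ((lam + ε') * (t + (n : ℝ)))
        = (β' ω * Real.exp ((lam + ε') * t)) * Real.exp ((lam + ε') * (n : ℝ)) := by
          rw [mul_assoc, ← Real.exp_add]; ring_nf
      _ ≤ (β₁ ω * Real.exp ((lam + ε₁) * t)) * Real.exp ((lam + ε₁) * (n : ℝ)) := by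
          apply mul_le_mul hfac (Real.exp_le_exp.mpr ?_) (Real.exp_pos _).le (by positivity)
          have : lam + ε' ≤ lam + ε₁ := by linarith
          exact mul_le_mul_of_nonneg_right this hn
      _ ≤ β₁ (θ t ω) * Real.exp ((lam + ε₁) * (n : ℝ)) :=
          mul_le_mul_of_nonneg_right h3' (Real.exp_pos _).le
  · have hest := h1 ω hω x hx t ht0
    have h3' := (h3 ω hω t ht0).1
    exact hest.trans (hfacρ.trans h3')
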